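/- Let F(λ) = 3^{3/2}·cosh((2λ)^{1/4})·(cosh^2((2λ)^{1/4}) + 2)^{-3/2} for λ > 0. Then F''(λ) = (1/(9√2))·λ^{-1/2} + O(1) as λ ↓ 0, and F''(λ) = O(exp(-2(2λ)^{1/4})) as λ → ∞. -/

import Mathlib

open Asymptotics Filter
open Real
set_option maxHeartbeats 1000000


lemma taylor_sc {u : ℝ} (h0 : 0 ≤ u) (h1 : u ≤ 1/2) :
    |Real.cosh u - (1 + u^2/2 + u^4/24)| ≤ u^6/600 ∧
    |Real.sinh u - (u + u^3/6 + u^5/120)| ≤ u^6/600 := by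
  have h1' : |u| ≤ 1 := by rw [abs_of_nonneg h0]; linarith
  have h2' : |(-u)| ≤ 1 := by rwa [abs_neg]
  have e1 := Real.exp_bound h1' (by norm_num : 0 < 6)
  have e2 := Real.exp_bound h2' (by norm_num : 0 < 6)
  norm_num [Finset.sum_range_succ, Nat.factorial, abs_of_nonneg h0] at e1 e2
  rw [Real.cosh_eq, Real.sinh_eq]
  rw [abs_le] at e1 e2
  obtain ⟨a1, b1⟩ := e1
  obtain ⟨a2, b2⟩ := e2
  constructor <;> rw [abs_le] <;> constructor <;> nlinarith [pow_nonneg h0 6]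

private lemma lad {u : ℝ} (h0 : 0 < u) (h1 : u ≤ 1/2) (k : ℕ) : u^(k+1) ≤ u^k * (1/2) := by
  calc u^(k+1) = u^k * u := by ring
  _ ≤ u^k * (1/2) := mul_le_mul_of_nonneg_left h1 (pow_pos h0 k).le

private lemma PB_u {u : ℝ} (h0 : 0 < u) (h1 : u ≤ 1/2) :
    (9 + 3*u^2 + u^4 + u^6)*(u^3/3 + u^5/20) - 5*((u^2+u^4/3)*(1+u^2/2))*u
      ≤ -2*u^3 - 2*u^5 := by
  nlinarith only [lad h0 h1 6, lad h0 h1 7, lad h0 h1 8, lad h0 h1 9, lad h0 h1 10,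
    pow_pos h0 5, pow_pos h0 7]

private lemma PB_l {u : ℝ} (h0 : 0 < u) (h1 : u ≤ 1/2) :
    -2*u^3 - 5*u^5 ≤
      (9 + 3*u^2)*(u^3/3 - u^5/100) - 5*((u^2+u^4/3+u^6/10)*(1+u^2/2+u^4/20))*u := by
  nlinarith only [lad h0 h1 6, lad h0 h1 7, lad h0 h1 8, lad h0 h1 9, lad h0 h1 10,
    pow_pos h0 5, pow_pos h0 7]

private lemma Pt1_u {u : ℝ} (h0 : 0 < u) : 3/2*(3*((u^2+u^4/3)*(-2*u^3-2*u^5))) ≤ -9*u^5 := by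
  nlinarith only [pow_pos h0 7, pow_pos h0 9]

private lemma Pt1_l {u : ℝ} (h0 : 0 < u) (h1 : u ≤ 1/2) :
    -9*u^5 - 40*u^7 ≤ 3/2*((3+u^2)*((u^2+u^4/3+u^6/10)*(-2*u^3-5*u^5))) := by
  nlinarith only [lad h0 h1 7, lad h0 h1 8, lad h0 h1 9, lad h0 h1 10, lad h0 h1 11,
    lad h0 h1 12, pow_pos h0 7, pow_pos h0 9]

lemma core_alg (u s c w B : ℝ) (h0 : 0 < u) (h1 : u ≤ 1/2)
    (hsl : u + u^3/6 ≤ s) (hsu : s ≤ u + u^3/6 + u^5/100)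
    (hcl : 1 + u^2/2 ≤ c) (hcu : c ≤ 1 + u^2/2 + u^4/20)
    (hw0 : 0 ≤ w) (hw2 : w^2 = 3*(s^2+3))
    (hB : B = 3*(s^2+3)*(c*u - s) - 5*s^2*c*u) :
    |3/2*w*s^2*B + u^5*(s^2+3)^4/9| ≤ 50*u^7 := by
  have hspos : 0 < s := by nlinarith only [hsl, h0, pow_pos h0 3]
  have hcpos : 0 < c := by nlinarith only [hcl, sq_nonneg u]
  have hs2l : u^2 + u^4/3 ≤ s^2 := by
    nlinarith only [mul_le_mul hsl hsl (by positivity : (0:ℝ) ≤ u + u^3/6) hspos.le,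
      pow_pos h0 6]
  have hs2u : s^2 ≤ u^2 + u^4/3 + u^6/10 := by
    nlinarith only [mul_le_mul hsu hsu hspos.le (by positivity : (0:ℝ) ≤ u + u^3/6 + u^5/100),
      lad h0 h1 6, lad h0 h1 7, lad h0 h1 8, lad h0 h1 9, pow_pos h0 6]
  have hwl : 3 ≤ w := by nlinarith only [hw0, hw2, sq_nonneg s]
  have hwu : w ≤ 3 + u^2 := by
    have h9 : w^2 ≤ (3+u^2)^2 := by
      nlinarith only [hw2, hs2u, lad h0 h1 4, lad h0 h1 5, pow_pos h0 2]
    have h10 : (0:ℝ) < w + (3 + u^2) := by positivity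
    nlinarith only [h9, h10]
  have hcusl : u^3/3 - u^5/100 ≤ c*u - s := by
    nlinarith only [mul_le_mul_of_nonneg_right hcl h0.le, hsu]
  have hcusu : c*u - s ≤ u^3/3 + u^5/20 := by
    nlinarith only [mul_le_mul_of_nonneg_right hcu h0.le, hsl]
  have hcuspos : 0 ≤ c*u - s := by
    nlinarith only [hcusl, lad h0 h1 3, lad h0 h1 4, pow_pos h0 3]
  have p1 : 3*(s^2+3)*(c*u-s) ≤ (9 + 3*u^2 + u^4 + u^6)*(u^3/3 + u^5/20) := by
    have q1 : 3*(s^2+3) ≤ 9 + 3*u^2 + u^4 + u^6 := by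
      nlinarith only [hs2u, lad h0 h1 5, pow_pos h0 6]
    exact mul_le_mul q1 hcusu hcuspos (by positivity)
  have p2 : (9 + 3*u^2)*(u^3/3 - u^5/100) ≤ 3*(s^2+3)*(c*u-s) := by
    have q1 : 9 + 3*u^2 ≤ 3*(s^2+3) := by nlinarith only [hs2l, pow_pos h0 4]
    have q3 : (0:ℝ) ≤ u^3/3 - u^5/100 := by
      nlinarith only [lad h0 h1 3, lad h0 h1 4, pow_pos h0 3]
    exact mul_le_mul q1 hcusl q3 (by positivity)
  have p3 : s^2*c ≤ (u^2+u^4/3+u^6/10)*(1+u^2/2+u^4/20) :=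
    mul_le_mul hs2u hcu hcpos.le (by positivity)
  have p4 : (u^2+u^4/3)*(1+u^2/2) ≤ s^2*c :=
    mul_le_mul hs2l hcl (by positivity) (sq_nonneg s)
  have p3' := mul_le_mul_of_nonneg_right p3 h0.le
  have p4' := mul_le_mul_of_nonneg_right p4 h0.le
  have hBu : B ≤ -2*u^3 - 2*u^5 := by
    have h := PB_u h0 h1; rw [hB]; linarith only [p1, p4', h]
  have hBl : -2*u^3 - 5*u^5 ≤ B := by
    have h := PB_l h0 h1; rw [hB]; linarith only [p2, p3', h]
  have hneg1 : (-2*u^3-2*u^5 : ℝ) ≤ 0 := by nlinarith only [pow_pos h0 3, pow_pos h0 5]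
  have hneg2 : (-2*u^3-5*u^5 : ℝ) ≤ 0 := by nlinarith only [pow_pos h0 3, pow_pos h0 5]
  have hBneg : B < 0 := by nlinarith only [hBu, pow_pos h0 3, pow_pos h0 5]
  have hsB_u : s^2*B ≤ (u^2+u^4/3)*(-2*u^3-2*u^5) :=
    (mul_le_mul_of_nonneg_left hBu (sq_nonneg s)).trans
      (mul_le_mul_of_nonpos_right hs2l hneg1)
  have hsB_l : (u^2+u^4/3+u^6/10)*(-2*u^3-5*u^5) ≤ s^2*B :=
    (mul_le_mul_of_nonpos_right hs2u hneg2).trans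
      (mul_le_mul_of_nonneg_left hBl (sq_nonneg s))
  have hsBneg : s^2*B < 0 := mul_neg_of_pos_of_neg (by positivity) hBneg
  have ht1u : 3/2*w*s^2*B ≤ -9*u^5 := by
    have e1 : w*(s^2*B) ≤ 3*(s^2*B) := mul_le_mul_of_nonpos_right hwl hsBneg.le
    have e3 := Pt1_u h0
    nlinarith only [e1, hsB_u, e3]
  have ht1l : -9*u^5 - 40*u^7 ≤ 3/2*w*s^2*B := by
    have hneg : (u^2+u^4/3+u^6/10)*(-2*u^3-5*u^5) ≤ 0 :=
      mul_nonpos_iff.mpr (Or.inl ⟨by positivity, hneg2⟩)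
    have e1 : w*((u^2+u^4/3+u^6/10)*(-2*u^3-5*u^5)) ≤ w*(s^2*B) :=
      mul_le_mul_of_nonneg_left hsB_l hw0
    have e2 : (3+u^2)*((u^2+u^4/3+u^6/10)*(-2*u^3-5*u^5)) ≤
        w*((u^2+u^4/3+u^6/10)*(-2*u^3-5*u^5)) :=
      mul_le_mul_of_nonpos_right hwu hneg
    have e3 := Pt1_l h0 h1
    nlinarith only [e1, e2, e3]
  have hu2 : u^2 ≤ 1/4 := by nlinarith only [h0, h1]
  have q4 : u^4 ≤ u^2/4 := by
    nlinarith only [mul_le_mul_of_nonneg_left hu2 (sq_nonneg u)]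
  have q6 : u^6 ≤ u^2/16 := by
    nlinarith only [mul_le_mul_of_nonneg_right q4 (sq_nonneg u), q4]
  have hs2u' : s^2 ≤ (11/10)*u^2 := by linarith only [hs2u, q4, q6, sq_nonneg u]
  have hx40 : s^2 ≤ (11/40 : ℝ) := by linarith only [hs2u', hu2]
  have hA4u : (s^2+3)^4 ≤ 81 + 137*u^2 := by
    have m := sq_nonneg s
    have e2 : s^2*s^2 ≤ (11/40)*s^2 := by
      nlinarith only [mul_le_mul_of_nonneg_left hx40 m]
    have e3 : s^2*s^2*s^2 ≤ (11/40)^2*s^2 := by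
      nlinarith only [mul_le_mul_of_nonneg_right e2 m, e2]
    have e4 : s^2*s^2*s^2*s^2 ≤ (11/40)^3*s^2 := by
      nlinarith only [mul_le_mul_of_nonneg_right e3 m, e3]
    nlinarith only [m, e2, e3, e4, hs2u']
  have hA4l : (81:ℝ) ≤ (s^2+3)^4 := by
    nlinarith only [sq_nonneg s, sq_nonneg (s*s), sq_nonneg (s*s*s), sq_nonneg (s*s*s*s)]
  have ht2l : 9*u^5 ≤ u^5*(s^2+3)^4/9 := by
    nlinarith only [mul_le_mul_of_nonneg_left hA4l (pow_pos h0 5).le]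
  have ht2u : u^5*(s^2+3)^4/9 ≤ 9*u^5 + 16*u^7 := by
    nlinarith only [mul_le_mul_of_nonneg_left hA4u (pow_pos h0 5).le, pow_pos h0 7]
  rw [abs_le]
  constructor
  · linarith only [ht1l, ht2l, pow_pos h0 7]
  · linarith only [ht1u, ht2u, pow_pos h0 7]

lemma core {u : ℝ} (h0 : 0 < u) (h1 : u ≤ 1/2) :
    |3/2 * (Real.sqrt 3 * Real.sqrt (Real.cosh u^2+2)) * Real.sinh u^2 *
      (3*(Real.cosh u^2+2)*(Real.cosh u*u - Real.sinh u) - 5*Real.sinh u^2*Real.cosh u*u)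
     + u^5*(Real.cosh u^2+2)^4/9| ≤ 50*u^7 := by
  obtain ⟨hc, hs⟩ := taylor_sc h0.le h1
  rw [abs_le] at hc hs
  obtain ⟨hc1, hc2⟩ := hc
  obtain ⟨hs1, hs2⟩ := hs
  have hA : Real.cosh u^2+2 = Real.sinh u^2+3 := by rw [Real.cosh_sq]; ring
  rw [hA]
  refine core_alg u (Real.sinh u) (Real.cosh u) _ _ h0 h1
    (by nlinarith only [hs1, lad h0 h1 5, pow_pos h0 5])
    (by nlinarith only [hs2, lad h0 h1 5, pow_pos h0 5])
    (by nlinarith only [hc1, lad h0 h1 4, lad h0 h1 5, pow_pos h0 4])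
    (by nlinarith only [hc2, lad h0 h1 4, lad h0 h1 5, pow_pos h0 4])
    (mul_nonneg (Real.sqrt_nonneg _) (Real.sqrt_nonneg _)) ?_ rfl
  rw [mul_pow, Real.sq_sqrt (by norm_num : (0:ℝ) ≤ 3),
    Real.sq_sqrt (by positivity : (0:ℝ) ≤ Real.sinh u^2+3)]


noncomputable def F1 (l : ℝ) : ℝ :=
  -(3 ^ ((3:ℝ)/2)) * Real.sinh ((2*l) ^ ((1:ℝ)/4)) ^ 3 *
    (Real.cosh ((2*l) ^ ((1:ℝ)/4)) ^ 2 + 2) ^ (-(5:ℝ)/2) * (2*l) ^ (-(3:ℝ)/4)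

lemma hasDeriv1 {l : ℝ} (hl : 0 < l) :
    HasDerivAt (fun x => 3 ^ ((3:ℝ)/2) * Real.cosh ((2*x) ^ ((1:ℝ)/4)) *
      (Real.cosh ((2*x) ^ ((1:ℝ)/4)) ^ 2 + 2) ^ (-(3:ℝ)/2)) (F1 l) l := by
  have h2l : (0:ℝ) < 2*l := by linarith
  have hu : HasDerivAt (fun x : ℝ => (2*x) ^ ((1:ℝ)/4))
      (2 * ((1:ℝ)/4) * (2*l) ^ ((1:ℝ)/4 - 1)) l := by
    have h := (hasDerivAt_id l).const_mul (2:ℝ)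
    simpa using h.rpow_const (Or.inl h2l.ne')
  have hcosh := hu.cosh
  have hA := (hcosh.pow 2).add_const (2:ℝ)
  have hApos : (0:ℝ) < Real.cosh ((2*l) ^ ((1:ℝ)/4)) ^ 2 + 2 := by positivity
  have hAp := hA.rpow_const (p := -(3:ℝ)/2) (Or.inl hApos.ne')
  have hprod := (hcosh.const_mul ((3:ℝ) ^ ((3:ℝ)/2))).mul hAp
  refine hprod.congr_deriv (Eq.symm ?_)
  simp only [Pi.pow_apply, Pi.mul_apply]
  rw [F1]
  have he1 : (1:ℝ)/4 - 1 = -(3:ℝ)/4 := by norm_num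
  have he2 : -(3:ℝ)/2 - 1 = -(5:ℝ)/2 := by norm_num
  rw [he1, he2]
  have hA32 : (Real.cosh ((2*l) ^ ((1:ℝ)/4)) ^ 2 + 2) ^ (-(3:ℝ)/2)
      = (Real.cosh ((2*l) ^ ((1:ℝ)/4)) ^ 2 + 2) *
        (Real.cosh ((2*l) ^ ((1:ℝ)/4)) ^ 2 + 2) ^ (-(5:ℝ)/2) := by
    rw [show -(3:ℝ)/2 = 1 + (-(5:ℝ)/2) by norm_num, Real.rpow_add hApos, Real.rpow_one]
  rw [hA32]
  have hc2 : Real.cosh ((2*l) ^ ((1:ℝ)/4)) ^ 2 = Real.sinh ((2*l) ^ ((1:ℝ)/4)) ^ 2 + 1 :=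
    Real.cosh_sq _
  set u := (2*l) ^ ((1:ℝ)/4)
  set c := Real.cosh u
  set s := Real.sinh u
  set x5 := (c ^ 2 + 2) ^ (-(5:ℝ)/2)
  set y := (2*l) ^ (-(3:ℝ)/4)
  linear_combination (3 ^ ((3:ℝ)/2) * s * x5 * y) * hc2

noncomputable def F2 (l : ℝ) : ℝ :=
  -(3 ^ ((3:ℝ)/2)/2) * (2*l) ^ (-(7:ℝ)/4) * Real.sinh ((2*l) ^ ((1:ℝ)/4)) ^ 2 *
    (Real.cosh ((2*l) ^ ((1:ℝ)/4)) ^ 2 + 2) ^ (-(7:ℝ)/2) *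
    (3*(Real.cosh ((2*l) ^ ((1:ℝ)/4)) ^ 2 + 2) *
        (Real.cosh ((2*l) ^ ((1:ℝ)/4)) * (2*l) ^ ((1:ℝ)/4) - Real.sinh ((2*l) ^ ((1:ℝ)/4)))
      - 5 * Real.sinh ((2*l) ^ ((1:ℝ)/4)) ^ 2 * Real.cosh ((2*l) ^ ((1:ℝ)/4)) * (2*l) ^ ((1:ℝ)/4))

lemma hasDeriv2 {l : ℝ} (hl : 0 < l) : HasDerivAt F1 (F2 l) l := by
  have h2l : (0:ℝ) < 2*l := by linarith
  have hu : HasDerivAt (fun x : ℝ => (2*x) ^ ((1:ℝ)/4))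
      (2 * ((1:ℝ)/4) * (2*l) ^ ((1:ℝ)/4 - 1)) l := by
    have h := (hasDerivAt_id l).const_mul (2:ℝ)
    simpa using h.rpow_const (Or.inl h2l.ne')
  have hs3 := (hu.sinh).pow 3
  have hcosh := hu.cosh
  have hA := (hcosh.pow 2).add_const (2:ℝ)
  have hApos : (0:ℝ) < Real.cosh ((2*l) ^ ((1:ℝ)/4)) ^ 2 + 2 := by positivity
  have hA5 := hA.rpow_const (p := -(5:ℝ)/2) (Or.inl hApos.ne')
  have hy : HasDerivAt (fun x : ℝ => (2*x) ^ (-(3:ℝ)/4))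
      (2 * (-(3:ℝ)/4) * (2*l) ^ (-(3:ℝ)/4 - 1)) l := by
    have h := (hasDerivAt_id l).const_mul (2:ℝ)
    simpa using h.rpow_const (Or.inl h2l.ne')
  have hprod := ((hs3.const_mul (-((3:ℝ) ^ ((3:ℝ)/2)))).mul hA5).mul hy
  have key : HasDerivAt (fun x => -(3 ^ ((3:ℝ)/2)) * Real.sinh ((2*x) ^ ((1:ℝ)/4)) ^ 3 *
      (Real.cosh ((2*x) ^ ((1:ℝ)/4)) ^ 2 + 2) ^ (-(5:ℝ)/2) * (2*x) ^ (-(3:ℝ)/4)) (F2 l) l := by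
    refine hprod.congr_deriv (Eq.symm ?_)
    simp only [Pi.pow_apply, Pi.mul_apply]
    rw [F2]
    have he1 : (1:ℝ)/4 - 1 = -(3:ℝ)/4 := by norm_num
    have he2 : -(5:ℝ)/2 - 1 = -(7:ℝ)/2 := by norm_num
    have he3 : -(3:ℝ)/4 - 1 = -(7:ℝ)/4 := by norm_num
    rw [he1, he2, he3]
    have hA52 : (Real.cosh ((2*l) ^ ((1:ℝ)/4)) ^ 2 + 2) ^ (-(5:ℝ)/2)
        = (Real.cosh ((2*l) ^ ((1:ℝ)/4)) ^ 2 + 2) *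
          (Real.cosh ((2*l) ^ ((1:ℝ)/4)) ^ 2 + 2) ^ (-(7:ℝ)/2) := by
      rw [show -(5:ℝ)/2 = 1 + (-(7:ℝ)/2) by norm_num, Real.rpow_add hApos, Real.rpow_one]
    rw [hA52]
    have hz2 : (2*l)^(-(3:ℝ)/4) * (2*l)^(-(3:ℝ)/4) = (2*l)^(-(7:ℝ)/4) * (2*l)^((1:ℝ)/4) := by
      rw [← Real.rpow_add h2l, ← Real.rpow_add h2l]; norm_num
    set u := (2*l) ^ ((1:ℝ)/4)
    set c := Real.cosh u
    set s := Real.sinh u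
    set x7 := (c ^ 2 + 2) ^ (-(7:ℝ)/2)
    set y := (2*l) ^ (-(3:ℝ)/4)
    set t := (2*l) ^ (-(7:ℝ)/4)
    linear_combination (((3:ℝ) ^ ((3:ℝ)/2)) * x7 * ((3/2)*s^2*c*(c^2+2) - (5/2)*s^4*c)) * hz2
  exact key

lemma hK32 : (3:ℝ) ^ ((3:ℝ)/2) = 3 * Real.sqrt 3 := by
  rw [show (3:ℝ)/2 = 1 + (1/2:ℝ) by norm_num, Real.rpow_add (by norm_num), Real.rpow_one,
    ← Real.sqrt_eq_rpow]

-- powers of u identities at l > 0, u = (2l)^(1/4)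
lemma hu4 {l : ℝ} (hl : 0 < l) : ((2*l) ^ ((1:ℝ)/4))^(4:ℕ) = 2*l := by
  rw [← Real.rpow_natCast ((2*l) ^ ((1:ℝ)/4)) 4, ← Real.rpow_mul (by linarith : (0:ℝ) ≤ 2*l)]
  norm_num

lemma i1 {l : ℝ} (hl : 0 < l) : (2*l) ^ (-(7:ℝ)/4) = (((2*l) ^ ((1:ℝ)/4))^(7:ℕ))⁻¹ := by
  rw [← Real.rpow_natCast ((2*l) ^ ((1:ℝ)/4)) 7, ← Real.rpow_mul (by linarith : (0:ℝ) ≤ 2*l),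
    ← Real.rpow_neg (by linarith : (0:ℝ) ≤ 2*l)]
  norm_num

lemma i2 {A : ℝ} (hA : 0 < A) : A ^ (-(7:ℝ)/2) = Real.sqrt A * ((A^(4:ℕ))⁻¹) := by
  rw [show -(7:ℝ)/2 = 1/2 + (-4 : ℝ) by norm_num, Real.rpow_add hA, ← Real.sqrt_eq_rpow,
    ← Real.rpow_natCast A 4, ← Real.rpow_neg hA.le]
  norm_num

lemma est0 {l : ℝ} (hl : 0 < l) (hl' : l ≤ 1/32) :
    |F2 l - 1/(9*Real.sqrt 2)*l ^ (-(1:ℝ)/2)| ≤ 1 := by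
  have h2l : (0:ℝ) < 2*l := by linarith
  set u := (2*l) ^ ((1:ℝ)/4) with hu
  have hu0 : 0 < u := Real.rpow_pos_of_pos h2l _
  have hu12 : u ≤ 1/2 := by
    rw [hu, show (1:ℝ)/2 = ((1:ℝ)/16) ^ ((1:ℝ)/4) by
      rw [show (1/16:ℝ) = (1/2:ℝ)^(4:ℕ) by norm_num, ← Real.rpow_natCast ((1:ℝ)/2) 4,
        ← Real.rpow_mul (by norm_num)]
      norm_num]
    exact Real.rpow_le_rpow h2l.le (by linarith) (by norm_num)
  set c := Real.cosh u with hc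
  set s := Real.sinh u with hs
  have hApos : (0:ℝ) < c^2+2 := by positivity
  have hcore := core hu0 hu12
  have hl4 : l = u^(4:ℕ)/2 := by rw [hu, hu4 hl]; ring
  have hi3 : l ^ (-(1:ℝ)/2) = Real.sqrt 2 * ((u^2)⁻¹) := by
    rw [show -(1:ℝ)/2 = -(1/2 : ℝ) by norm_num, Real.rpow_neg hl.le, ← Real.sqrt_eq_rpow,
      hl4, show (u^(4:ℕ)/2 : ℝ) = (u^2)^2/2 by ring, Real.sqrt_div (sq_nonneg _),
      Real.sqrt_sq (sq_nonneg u), inv_div, div_eq_mul_inv]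
  have hrw : F2 l = -(3*Real.sqrt 3/2) * (u^7)⁻¹ * s^2 *
      (Real.sqrt (c^2+2) * ((c^2+2)^(4:ℕ))⁻¹) *
      (3*(c^2+2)*(c*u - s) - 5*s^2*c*u) := by
    rw [F2, i1 hl, i2 hApos, hK32]
  have hXeq : F2 l - 1/(9*Real.sqrt 2)*l ^ (-(1:ℝ)/2)
      = -((3/2 * (Real.sqrt 3 * Real.sqrt (c^2+2)) * s^2 *
          (3*(c^2+2)*(c*u - s) - 5*s^2*c*u) + u^5*(c^2+2)^4/9) / (u^7 * (c^2+2)^4)) := by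
    rw [hrw, hi3]
    have hs2 : Real.sqrt 2 ≠ 0 := by positivity
    have hu7 : (u:ℝ)^7 ≠ 0 := by positivity
    have hA4 : ((c:ℝ)^2+2)^4 ≠ 0 := by positivity
    field_simp
    ring
  rw [hXeq]
  have hA3 : (3:ℝ) ≤ c^2+2 := by nlinarith [Real.one_le_cosh u]
  have hA4 : (81:ℝ) ≤ (c^2+2)^4 := by nlinarith [hA3, sq_nonneg ((c^2+2) - 3), sq_nonneg (c^2+2)]
  have hden : (0:ℝ) < u^7 * (c^2+2)^4 := by positivity
  rw [abs_neg, abs_div, abs_of_pos hden, div_le_one hden]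
  calc |3/2 * (Real.sqrt 3 * Real.sqrt (c^2+2)) * s^2 *
          (3*(c^2+2)*(c*u - s) - 5*s^2*c*u) + u^5*(c^2+2)^4/9| ≤ 50*u^7 := hcore
    _ ≤ u^7 * (c^2+2)^4 := by nlinarith only [hA4, pow_pos hu0 7]

lemma estInf {l : ℝ} (hl : 1 ≤ l) : |F2 l| ≤ 10000 * Real.exp (-2 * (2*l) ^ ((1:ℝ)/4)) := by
  have hl0 : (0:ℝ) < l := by linarith
  have h2l : (0:ℝ) < 2*l := by linarith
  set u := (2*l) ^ ((1:ℝ)/4) with hu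
  have hu0 : 0 < u := Real.rpow_pos_of_pos h2l _
  have hu1 : 1 ≤ u := Real.one_le_rpow (by linarith) (by norm_num)
  set c := Real.cosh u with hc
  set s := Real.sinh u with hs
  set E := Real.exp u with hE
  have hE1 : 1 ≤ E := by rw [hE]; nlinarith [Real.add_one_le_exp u, hu0]
  have hE0 : 0 < E := lt_of_lt_of_le one_pos hE1
  have hexpneg : 0 < Real.exp (-u) := Real.exp_pos _
  have hexpneg' : Real.exp (-u) ≤ E := by
    rw [hE]; exact Real.exp_le_exp.mpr (by linarith)
  have hcE : c ≤ E := by rw [hc, Real.cosh_eq]; linarith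
  have hsc : s ≤ c := by rw [hc, hs, Real.cosh_eq, Real.sinh_eq]; linarith
  have hs0 : 0 < s := by rw [hs]; exact Real.sinh_pos_iff.mpr hu0
  have hc0 : 0 < c := Real.cosh_pos u
  have hcE2 : E/2 ≤ c := by rw [hc, Real.cosh_eq]; linarith
  have hApos : (0:ℝ) < c^2+2 := by positivity
  have hAge : E^2/4 ≤ c^2+2 := by nlinarith [hcE2, hE0]
  have hAle : c^2+2 ≤ 3*E^2 := by nlinarith [hcE, hc0, hE1]
  have hT : (c^2+2) ^ (-(7:ℝ)/2) ≤ 128 * ((E^(7:ℕ))⁻¹) := by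
    have h1 : (c^2+2) ^ (-(7:ℝ)/2) ≤ (E^2/4) ^ (-(7:ℝ)/2) :=
      Real.rpow_le_rpow_of_nonpos (by positivity) hAge (by norm_num)
    have e1 : ((E^2:ℝ))^((7:ℝ)/2) = E^(7:ℕ) := by
      rw [← Real.rpow_natCast E 2, ← Real.rpow_mul hE0.le, ← Real.rpow_natCast E 7]
      norm_num
    have e2 : ((4:ℝ))^((7:ℝ)/2) = 128 := by
      rw [show (4:ℝ) = (2:ℝ)^(2:ℕ) by norm_num, ← Real.rpow_natCast (2:ℝ) 2,
        ← Real.rpow_mul (by norm_num)]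
      rw [show ((2:ℕ):ℝ)*((7:ℝ)/2) = ((7:ℕ):ℝ) by push_cast; ring, Real.rpow_natCast]
      norm_num
    have h2 : (E^2/4 : ℝ) ^ (-(7:ℝ)/2) = 128 * ((E^(7:ℕ))⁻¹) := by
      rw [show (-(7:ℝ)/2) = -((7:ℝ)/2) by norm_num, Real.rpow_neg (by positivity),
        Real.div_rpow (by positivity) (by norm_num), e1, e2]
      rw [inv_div]
      ring
    linarith [h1, h2.le]
  have hcus : 0 ≤ c*u - s := by nlinarith [hsc, hc0, hu1]
  have hcuE : c*u ≤ E*u := mul_le_mul_of_nonneg_right hcE hu0.le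
  have hs2E : s^2 ≤ E^2 := by nlinarith [hsc, hcE, hs0]
  have hBabs : |3*(c^2+2)*(c*u - s) - 5*s^2*c*u| ≤ 14*u*E^3 := by
    rw [abs_le]
    constructor
    · have h5 : 5*s^2*(c*u) ≤ 5*E^2*(E*u) := by
        nlinarith [mul_le_mul hs2E hcuE (by positivity) (by positivity)]
      nlinarith [mul_nonneg (mul_nonneg (by norm_num : (0:ℝ) ≤ 3) hApos.le) hcus, h5, hu0, hE0]
    · have h1 : 3*(c^2+2)*(c*u-s) ≤ 3*(3*E^2)*(E*u) := by
        have e1 : c*u - s ≤ E*u := by nlinarith [hcuE, hs0]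
        nlinarith [mul_le_mul hAle e1 hcus (by positivity : (0:ℝ) ≤ 3*E^2)]
      nlinarith [h1, mul_nonneg (mul_nonneg (mul_nonneg (by norm_num : (0:ℝ) ≤ 5)
        (sq_nonneg s)) hc0.le) hu0.le]
  have hTpos : (0:ℝ) < (c^2+2) ^ (-(7:ℝ)/2) := Real.rpow_pos_of_pos hApos _
  have habs : |F2 l| = (3*Real.sqrt 3/2) * ((u^(7:ℕ))⁻¹) * s^2 * ((c^2+2) ^ (-(7:ℝ)/2)) *
      |3*(c^2+2)*(c*u - s) - 5*s^2*c*u| := by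
    rw [F2, i1 hl0, hK32, ← hu, ← hc, ← hs]
    rw [abs_mul, abs_mul, abs_mul, abs_mul]
    rw [abs_of_nonpos (neg_nonpos.mpr (by positivity : (0:ℝ) ≤ 3*Real.sqrt 3/2))]
    rw [abs_of_nonneg (by positivity : (0:ℝ) ≤ ((u^(7:ℕ)):ℝ)⁻¹),
      abs_of_nonneg (sq_nonneg s), abs_of_nonneg hTpos.le]
    ring
  rw [habs]
  -- numeric assembly
  have hK9 : (3:ℝ)*Real.sqrt 3 ≤ 9 := by
    nlinarith [Real.sq_sqrt (by norm_num : (0:ℝ) ≤ 3), Real.sqrt_nonneg 3,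
      sq_nonneg (Real.sqrt 3 - 3)]
  have hsn : s^2 * ((c^2+2) ^ (-(7:ℝ)/2)) ≤ E^2 * (128 * ((E^(7:ℕ))⁻¹)) :=
    mul_le_mul hs2E hT hTpos.le (sq_nonneg E)
  have hb2 : (s^2 * ((c^2+2) ^ (-(7:ℝ)/2))) * |3*(c^2+2)*(c*u - s) - 5*s^2*c*u|
      ≤ (E^2 * (128 * ((E^(7:ℕ))⁻¹))) * (14*u*E^3) :=
    mul_le_mul hsn hBabs (abs_nonneg _) (by positivity)
  have hEid : (E^2 * (128 * ((E^(7:ℕ))⁻¹))) * (14*u*E^3) = 1792 * u * (E^2)⁻¹ := by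
    field_simp
    ring
  have hu7 : u ≤ u^(7:ℕ) := le_self_pow₀ (by linarith) (by norm_num)
  have hb3 : ((u^(7:ℕ)):ℝ)⁻¹ * (1792 * u * (E^2)⁻¹) ≤ 1792 * (E^2)⁻¹ := by
    rw [show ((u^(7:ℕ)):ℝ)⁻¹ * (1792 * u * (E^2)⁻¹) = 1792 * (u / u^(7:ℕ)) * (E^2)⁻¹ by ring]
    have : u / u^(7:ℕ) ≤ 1 := (div_le_one (by positivity)).mpr hu7
    nlinarith [this, inv_nonneg.mpr (sq_nonneg E), mul_le_mul_of_nonneg_right this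
      (inv_nonneg.mpr (sq_nonneg E))]
  have hfin : (3*Real.sqrt 3/2) * ((u^(7:ℕ))⁻¹) * s^2 * ((c^2+2) ^ (-(7:ℝ)/2)) *
      |3*(c^2+2)*(c*u - s) - 5*s^2*c*u| ≤ (9/2) * (1792 * (E^2)⁻¹) := by
    have hc12 : (0:ℝ) ≤ 3*Real.sqrt 3/2 := by positivity
    have step1 : (3*Real.sqrt 3/2) * ((u^(7:ℕ))⁻¹) * s^2 * ((c^2+2) ^ (-(7:ℝ)/2)) *
        |3*(c^2+2)*(c*u - s) - 5*s^2*c*u|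
        = (3*Real.sqrt 3/2) * (((u^(7:ℕ))⁻¹) * ((s^2 * ((c^2+2) ^ (-(7:ℝ)/2))) *
          |3*(c^2+2)*(c*u - s) - 5*s^2*c*u|)) := by ring
    rw [step1]
    have step2 : ((u^(7:ℕ)):ℝ)⁻¹ * ((s^2 * ((c^2+2) ^ (-(7:ℝ)/2))) *
        |3*(c^2+2)*(c*u - s) - 5*s^2*c*u|) ≤ 1792 * (E^2)⁻¹ := by
      calc ((u^(7:ℕ)):ℝ)⁻¹ * ((s^2 * ((c^2+2) ^ (-(7:ℝ)/2))) *
            |3*(c^2+2)*(c*u - s) - 5*s^2*c*u|)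
          ≤ ((u^(7:ℕ)):ℝ)⁻¹ * ((E^2 * (128 * ((E^(7:ℕ))⁻¹))) * (14*u*E^3)) :=
            mul_le_mul_of_nonneg_left hb2 (by positivity)
        _ = ((u^(7:ℕ)):ℝ)⁻¹ * (1792 * u * (E^2)⁻¹) := by rw [hEid]
        _ ≤ 1792 * (E^2)⁻¹ := hb3
    calc (3*Real.sqrt 3/2) * (((u^(7:ℕ))⁻¹) * ((s^2 * ((c^2+2) ^ (-(7:ℝ)/2))) *
          |3*(c^2+2)*(c*u - s) - 5*s^2*c*u|))
        ≤ (3*Real.sqrt 3/2) * (1792 * (E^2)⁻¹) := mul_le_mul_of_nonneg_left step2 hc12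
      _ ≤ (9/2) * (1792 * (E^2)⁻¹) := by
          have : (0:ℝ) ≤ 1792 * (E^2)⁻¹ := by positivity
          nlinarith [hK9, this]
  have hexp2 : Real.exp (-2*u) = (E^2)⁻¹ := by
    rw [hE, ← Real.exp_nat_mul]
    rw [show (-2*u : ℝ) = -(((2:ℕ):ℝ)*u) by push_cast; ring, Real.exp_neg]
  rw [hexp2]
  calc (3*Real.sqrt 3/2) * ((u^(7:ℕ))⁻¹) * s^2 * ((c^2+2) ^ (-(7:ℝ)/2)) *
      |3*(c^2+2)*(c*u - s) - 5*s^2*c*u| ≤ (9/2) * (1792 * (E^2)⁻¹) := hfin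
    _ ≤ 10000 * (E^2)⁻¹ := by nlinarith [inv_nonneg.mpr (sq_nonneg E)]

theorem stmt_7 (F : ℝ → ℝ)
    (hF : ∀ l : ℝ, F l = 3 ^ ((3 : ℝ) / 2) * Real.cosh ((2 * l) ^ ((1 : ℝ) / 4)) *
      (Real.cosh ((2 * l) ^ ((1 : ℝ) / 4)) ^ 2 + 2) ^ (-(3 : ℝ) / 2)) :
    ((fun l => deriv (deriv F) l - 1 / (9 * Real.sqrt 2) * l ^ (-(1 : ℝ) / 2))
        =O[nhdsWithin 0 (Set.Ioi 0)] (fun _ => (1 : ℝ))) ∧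
    (deriv (deriv F) =O[atTop] fun l => Real.exp (-2 * (2 * l) ^ ((1 : ℝ) / 4))) := by
  have hFeq : F = fun x => 3 ^ ((3:ℝ)/2) * Real.cosh ((2*x) ^ ((1:ℝ)/4)) *
      (Real.cosh ((2*x) ^ ((1:ℝ)/4)) ^ 2 + 2) ^ (-(3:ℝ)/2) := funext hF
  have hdd : ∀ l : ℝ, 0 < l → deriv (deriv F) l = F2 l := by
    intro l hl
    have h2 : deriv F =ᶠ[nhds l] F1 := by
      filter_upwards [isOpen_Ioi.mem_nhds (show l ∈ Set.Ioi (0:ℝ) from hl)] with x hx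
      have := hasDeriv1 (l := x) hx
      rw [← hFeq] at this
      exact this.deriv
    rw [h2.deriv_eq, (hasDeriv2 hl).deriv]
  constructor
  · rw [Asymptotics.isBigO_iff]
    refine ⟨1, ?_⟩
    filter_upwards [Ioo_mem_nhdsGT_of_mem (by norm_num : (0:ℝ) ∈ Set.Ico (0:ℝ) (1/32))]
      with l hl
    rw [hdd l hl.1]
    simpa [Real.norm_eq_abs] using est0 hl.1 hl.2.le
  · rw [Asymptotics.isBigO_iff]
    refine ⟨10000, ?_⟩
    filter_upwards [eventually_ge_atTop (1:ℝ)] with l hl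
    rw [hdd l (by linarith)]
    rw [Real.norm_eq_abs, Real.norm_eq_abs, Real.abs_exp]
    exact estInf hl
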